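/- Let V be a real vector space, η¹,...,η^k linearly independent covectors and ω¹,...,ω^k alternating bilinear forms on V satisfying ∩_{α=1}^k (ker η^α ∩ ker ω^α) = {0} and dim(∩_{α=1}^k ker ω^α) = k. Then there exist unique vectors R_1,...,R_k ∈ V with η^β(R_α) = δ^β_α and ω^β(R_α,·) = 0 for all α, β. -/
import Mathlib


/-- Linear version of existence and uniqueness of the Reeb vectors of a
`k`-cosymplectic structure. -/
theorem linear_kcosymplectic_reeb
    (V : Type*) [AddCommGroup V] [Module ℝ V] [FiniteDimensional ℝ V]
    (k : ℕ)
    (η : Fin k → Module.Dual ℝ V) (hη : LinearIndependent ℝ η)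
    (ω : Fin k → V →ₗ[ℝ] Module.Dual ℝ V)
    (halt : ∀ (α : Fin k) (v w : V), ω α v w = - ω α w v)
    (h1 : (⨅ α : Fin k, (LinearMap.ker (η α) ⊓ LinearMap.ker (ω α))) = ⊥)
    (h2 : Module.finrank ℝ ↥(⨅ α : Fin k, LinearMap.ker (ω α)) = k) :
    ∃! R : Fin k → V, ∀ α β : Fin k,
      η β (R α) = (if α = β then (1 : ℝ) else 0) ∧ ω β (R α) = 0 := by
  set W : Submodule ℝ V := ⨅ α : Fin k, LinearMap.ker (ω α) with hW
  have hmemW : ∀ v : V, v ∈ W ↔ ∀ α, ω α v = 0 := by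
    intro v; simp [hW, Submodule.mem_iInf, LinearMap.mem_ker]
  set Φ : W →ₗ[ℝ] (Fin k → ℝ) :=
    LinearMap.pi (fun α => (η α).comp W.subtype) with hΦ
  have hΦapp : ∀ (v : W) (α : Fin k), Φ v α = η α (v : V) := by
    intro v α; rfl
  have hinj : Function.Injective Φ := by
    rw [← LinearMap.ker_eq_bot]
    ext v
    simp only [LinearMap.mem_ker, Submodule.mem_bot]
    constructor
    · intro hv
      have hη0 : ∀ α, η α (v : V) = 0 := fun α => by
        rw [← hΦapp, hv]; rfl
      have : (v : V) ∈ (⨅ α : Fin k, (LinearMap.ker (η α) ⊓ LinearMap.ker (ω α))) := by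
        simp only [Submodule.mem_iInf, Submodule.mem_inf, LinearMap.mem_ker]
        exact fun α => ⟨hη0 α, (hmemW v).1 v.2 α⟩
      rw [h1] at this
      exact Subtype.ext (by simpa using this)
    · rintro rfl; simp
  have hfr : Module.finrank ℝ W = Module.finrank ℝ (Fin k → ℝ) := by
    simp [h2, hW]
  set e : W ≃ₗ[ℝ] (Fin k → ℝ) := LinearMap.linearEquivOfInjective Φ hinj hfr with he
  have heapp : ∀ (v : W), e v = Φ v := fun v => rfl
  set R : Fin k → V := fun α => (e.symm (Pi.single α 1) : V) with hR
  have hRW : ∀ α, (⟨R α, (e.symm (Pi.single α 1)).2⟩ : W) = e.symm (Pi.single α 1) := fun α => rfl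
  have key : ∀ α β, η β (R α) = (if α = β then (1:ℝ) else 0) := by
    intro α β
    have : Φ (e.symm (Pi.single α 1)) β = (Pi.single α 1 : Fin k → ℝ) β := by
      rw [← heapp, e.apply_symm_apply]
    rw [hΦapp] at this
    rw [hR]
    rw [this]
    simp [Pi.single_apply, eq_comm]
  refine ⟨R, ⟨fun α β => ⟨key α β, ?_⟩, ?_⟩⟩
  · exact (hmemW (R α)).1 (e.symm (Pi.single α 1)).2 β
  · intro R' hR'
    funext α
    have hmem : R' α ∈ W := (hmemW (R' α)).2 fun β => (hR' α β).2
    have : Φ ⟨R' α, hmem⟩ = Pi.single α 1 := by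
      funext β
      rw [hΦapp]
      have := (hR' α β).1
      simp only [Pi.single_apply]
      simpa [eq_comm] using this
    have h3 : (⟨R' α, hmem⟩ : W) = e.symm (Pi.single α 1) := by
      apply e.injective
      rw [e.apply_symm_apply, heapp, this]
    have := congrArg (Subtype.val) h3
    simpa [hR] using this
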